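/- Let n ≥ 1, let k_1, …, k_n be pairwise distinct strictly positive real numbers, let f(u) := (−1)^{n+1} · u · ∏_{i=1}^n (1 − u/k_i), and let y_0 > max_i k_i. If T > 0 and y : (−T, 0] → ℝ is differentiable with y(0) = y_0 and y′(t) = f(y(t)) for all t ∈ (−T, 0], then T ≤ −∑_{i=1}^n [(∏_{j≠i} k_j) / (∏_{j≠i} (k_i − k_j))] · ln(1 − k_i/y_0); i.e., the solution blows up in the past no earlier than this exact finite time before 0, which in particular is smaller than (∏_{i=1}^n k_i)/(n·y_0^n·∏_{i=1}^n(1 − k_i/y_0)). -/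

import Mathlib

open Finset

private lemma sum_lagrange_prod (n : ℕ) (hn : 1 ≤ n) (k : Fin n → ℝ)
    (hinj : Function.Injective k) (u : ℝ) :
    ∑ i, ∏ j ∈ Finset.univ.erase i, ((u - k j) / (k i - k j)) = 1 := by
  have hne : (Finset.univ : Finset (Fin n)).Nonempty := ⟨⟨0, hn⟩, mem_univ _⟩
  have h := Lagrange.sum_basis (Function.Injective.injOn hinj) hne
  have h2 := congrArg (Polynomial.eval u) h
  simp only [Polynomial.eval_finset_sum, Polynomial.eval_one, Lagrange.basis,
    Polynomial.eval_prod, Lagrange.basisDivisor, Polynomial.eval_mul, Polynomial.eval_C,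
    Polynomial.eval_sub, Polynomial.eval_X] at h2
  rw [← h2]
  exact Finset.sum_congr rfl fun i _ => Finset.prod_congr rfl fun j _ => (div_eq_inv_mul _ _)

private lemma psi_mul_f (n : ℕ) (hn : 1 ≤ n) (k : Fin n → ℝ) (hk : ∀ i, 0 < k i)
    (hinj : Function.Injective k) (v : ℝ) (hv : ∀ i, k i < v) :
    (-∑ i, ((∏ j ∈ Finset.univ.erase i, k j) / (∏ j ∈ Finset.univ.erase i, (k i - k j))) *
        (k i / (v * (v - k i)))) * (-(v * ∏ i, (v - k i)) / ∏ i, k i) = 1 := by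
  rw [neg_mul, Finset.sum_mul]
  have hterm : ∀ i : Fin n,
      ((∏ j ∈ Finset.univ.erase i, k j) / (∏ j ∈ Finset.univ.erase i, (k i - k j))) *
        (k i / (v * (v - k i))) * (-(v * ∏ i, (v - k i)) / ∏ i, k i)
      = -∏ j ∈ Finset.univ.erase i, ((v - k j) / (k i - k j)) := by
    intro i
    have hv0 : (0:ℝ) < v := (hk i).trans (hv i)
    have hvki : (0:ℝ) < v - k i := sub_pos.2 (hv i)
    have e1 : (∏ j, (v - k j)) = (v - k i) * ∏ j ∈ Finset.univ.erase i, (v - k j) :=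
      (Finset.mul_prod_erase univ _ (mem_univ i)).symm
    have e2 : (∏ j, k j) = k i * ∏ j ∈ Finset.univ.erase i, k j :=
      (Finset.mul_prod_erase univ _ (mem_univ i)).symm
    have hc : (∏ j ∈ Finset.univ.erase i, (k i - k j)) ≠ 0 :=
      Finset.prod_ne_zero_iff.2 fun j hj =>
        sub_ne_zero.2 fun h => (Finset.mem_erase.1 hj).1 (hinj h).symm
    have hb : (∏ j ∈ Finset.univ.erase i, k j) ≠ 0 :=
      Finset.prod_ne_zero_iff.2 fun j _ => (hk j).ne'
    have hne1 : v ≠ 0 := hv0.ne'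
    have hne2 : v - k i ≠ 0 := hvki.ne'
    have hki : k i ≠ 0 := (hk i).ne'
    rw [e1, e2, Finset.prod_div_distrib]
    field_simp
  rw [Finset.sum_congr rfl (fun i _ => hterm i), Finset.sum_neg_distrib,
    sum_lagrange_prod n hn k hinj v]
  norm_num

private lemma f_repr (n : ℕ) (k : Fin n → ℝ) (hk : ∀ i, 0 < k i)
    (f : ℝ → ℝ) (hf : ∀ u, f u = (-1 : ℝ) ^ (n + 1) * u * ∏ i, (1 - u / k i)) (v : ℝ) :
    f v = -(v * ∏ i, (v - k i)) / ∏ i, k i := by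
  rw [hf]
  have h1 : ∏ i, (1 - v / k i) = (∏ i, -(v - k i)) / ∏ i, k i := by
    rw [← Finset.prod_div_distrib]
    exact Finset.prod_congr rfl fun i _ => by rw [neg_sub, sub_div, div_self (hk i).ne']
  have h2 : (∏ i : Fin n, -(v - k i)) = (-1 : ℝ)^n * ∏ i, (v - k i) := by
    have : ∀ i : Fin n, -(v - k i) = (-1 : ℝ) * (v - k i) := fun i => by ring
    rw [Finset.prod_congr rfl fun i _ => this i, Finset.prod_mul_distrib,
      Finset.prod_const, Finset.card_univ, Fintype.card_fin]
  have h3 : (-1 : ℝ)^(n+1) * (-1 : ℝ)^n = -1 := by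
    rw [← pow_add]
    have : n + 1 + n = 2*n + 1 := by ring
    rw [this, pow_add, pow_mul]
    norm_num
  rw [h1, h2]
  have hK : (∏ i, k i) ≠ 0 := (Finset.prod_pos (fun i _ => hk i)).ne'
  field_simp
  linear_combination (v * (∏ i, (v - k i))) * h3

/-- If `φ` is strictly antitone on `[v, ∞)` and tends to `0` at `+∞`, then `φ v > 0`. -/
private lemma pos_of_strictAntiOn_tendsto (φ : ℝ → ℝ) (v : ℝ)
    (h : StrictAntiOn φ (Set.Ici v)) (hlim : Filter.Tendsto φ Filter.atTop (nhds 0)) :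
    0 < φ v := by
  have h1 : (0:ℝ) ≤ φ (v + 1) := by
    refine le_of_tendsto hlim (Filter.eventually_atTop.2 ⟨v + 2, fun w hw => ?_⟩)
    exact (h (Set.mem_Ici.2 (by linarith)) (Set.mem_Ici.2 (by linarith)) (by linarith)).le
  have h2 : φ (v + 1) < φ v :=
    h (Set.mem_Ici.2 le_rfl) (Set.mem_Ici.2 (by linarith)) (by linarith)
  linarith

private lemma strictAntiOn_of_hasDerivAt (φ ψ : ℝ → ℝ) (v : ℝ)
    (hd : ∀ u ∈ Set.Ici v, HasDerivAt φ (ψ u) u) (hneg : ∀ u ∈ Set.Ioi v, ψ u < 0) :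
    StrictAntiOn φ (Set.Ici v) := by
  refine strictAntiOn_of_deriv_neg (convex_Ici v)
    (fun u hu => (hd u hu).continuousAt.continuousWithinAt) (fun u hu => ?_)
  rw [interior_Ici] at hu
  rw [(hd u (Set.Ioi_subset_Ici_self hu)).deriv]
  exact hneg u hu

set_option maxHeartbeats 2000000 in
theorem blow_up_backward (n : ℕ) (hn : 1 ≤ n)
    (k : Fin n → ℝ) (hk : ∀ i, 0 < k i) (hinj : Function.Injective k)
    (f : ℝ → ℝ) (hf : ∀ u, f u = (-1 : ℝ) ^ (n + 1) * u * ∏ i, (1 - u / k i))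
    (y₀ : ℝ) (hy₀ : ∀ i, k i < y₀) (T : ℝ) (hT : 0 < T)
    (y : ℝ → ℝ) (hy0 : y 0 = y₀)
    (hy : ∀ t ∈ Set.Ioc (-T) 0, HasDerivWithinAt y (f (y t)) (Set.Ioc (-T) 0) t) :
    T ≤ -∑ i, ((∏ j ∈ Finset.univ.erase i, k j) / (∏ j ∈ Finset.univ.erase i, (k i - k j))) *
          Real.log (1 - k i / y₀) ∧
    -∑ i, ((∏ j ∈ Finset.univ.erase i, k j) / (∏ j ∈ Finset.univ.erase i, (k i - k j))) *
          Real.log (1 - k i / y₀) <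
      (∏ i, k i) / (n * y₀ ^ n * ∏ i, (1 - k i / y₀)) := by
  classical
  have hne : (Finset.univ : Finset (Fin n)).Nonempty := ⟨⟨0, hn⟩, mem_univ _⟩
  have i₀ : Fin n := ⟨0, hn⟩
  have hy₀pos : 0 < y₀ := (hk i₀).trans (hy₀ i₀)
  have hKpos : 0 < ∏ i, k i := Finset.prod_pos fun i _ => hk i
  set B : Fin n → ℝ := fun i =>
    (∏ j ∈ Finset.univ.erase i, k j) / (∏ j ∈ Finset.univ.erase i, (k i - k j)) with hB
  set G : ℝ → ℝ := fun u => -∑ i, B i * Real.log (1 - k i / u) with hG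
  set ψ : ℝ → ℝ := fun v => -∑ i, B i * (k i / (v * (v - k i))) with hψ
  have f_eq : ∀ v, f v = -(v * ∏ i, (v - k i)) / ∏ i, k i := f_repr n k hk f hf
  have hfneg : ∀ v, (∀ i, k i < v) → f v < 0 := by
    intro v hv
    have hv0 : 0 < v := (hk i₀).trans (hv i₀)
    have hP : 0 < ∏ i, (v - k i) := Finset.prod_pos fun i _ => sub_pos.2 (hv i)
    rw [f_eq]
    exact div_neg_of_neg_of_pos (neg_neg_iff_pos.2 (by positivity)) hKpos
  have hψf : ∀ v, (∀ i, k i < v) → ψ v * f v = 1 := by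
    intro v hv
    rw [f_eq]
    exact psi_mul_f n hn k hk hinj v hv
  have hψneg : ∀ v, (∀ i, k i < v) → ψ v < 0 := by
    intro v hv
    nlinarith [hψf v hv, hfneg v hv]
  -- derivative of G
  have hGderiv : ∀ v, (∀ i, k i < v) → HasDerivAt G (ψ v) v := by
    intro v hv
    have hv0 : 0 < v := (hk i₀).trans (hv i₀)
    have hterm : ∀ i : Fin n,
        HasDerivAt (fun u => Real.log (1 - k i / u)) (k i / (v * (v - k i))) v := by
      intro i
      have hvki : 0 < v - k i := sub_pos.2 (hv i)
      have h1 : (1 : ℝ) - k i / v ≠ 0 := by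
        have : k i / v < 1 := (div_lt_one hv0).2 (hv i)
        linarith
      have d1 : HasDerivAt (fun u : ℝ => 1 - k i / u) (k i / v ^ 2) v := by
        have d0 : HasDerivAt (fun u : ℝ => 1 - k i * u⁻¹)
            (-(k i * -(v ^ 2)⁻¹)) v := ((hasDerivAt_inv hv0.ne').const_mul (k i)).const_sub 1
        have : -(k i * -(v ^ 2)⁻¹) = k i / v ^ 2 := by field_simp
        rw [this] at d0
        have hfun : (fun u : ℝ => 1 - k i / u) = fun u : ℝ => 1 - k i * u⁻¹ := by
          funext u; rw [div_eq_mul_inv]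
        rw [hfun]
        exact d0
      have d2 := d1.log h1
      have hval : k i / v ^ 2 / (1 - k i / v) = k i / (v * (v - k i)) := by
        rw [div_div]
        congr 1
        field_simp
      rw [hval] at d2
      exact d2
    have dsum : HasDerivAt (fun u => ∑ i, B i * Real.log (1 - k i / u))
        (∑ i, B i * (k i / (v * (v - k i)))) v :=
      HasDerivAt.fun_sum fun i _ => (hterm i).const_mul (B i)
    exact dsum.neg
  -- G tends to 0 at infinity
  have hGlim : Filter.Tendsto G Filter.atTop (nhds 0) := by
    have hterm : ∀ i : Fin n, Filter.Tendsto (fun u => Real.log (1 - k i / u))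
        Filter.atTop (nhds 0) := by
      intro i
      have h1 : Filter.Tendsto (fun u : ℝ => 1 - k i / u) Filter.atTop (nhds 1) := by
        have := tendsto_inv_atTop_zero.const_mul (k i)
        simpa [div_eq_mul_inv] using tendsto_const_nhds.sub this
      have := (Real.continuousAt_log one_ne_zero).tendsto.comp h1
      rw [Real.log_one] at this; exact this
    have hsum : Filter.Tendsto (fun u => ∑ i, B i * Real.log (1 - k i / u))
        Filter.atTop (nhds 0) := by
      have := tendsto_finset_sum (Finset.univ)
        (fun (i : Fin n) _ => (hterm i).const_mul (B i))
      simpa using this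
    simpa using hsum.neg
  -- G is positive on (max k, ∞)
  have hGpos : ∀ v, (∀ i, k i < v) → 0 < G v := by
    intro v hv
    refine pos_of_strictAntiOn_tendsto G v ?_ hGlim
    refine strictAntiOn_of_hasDerivAt G ψ v (fun u hu => hGderiv u fun i => ?_)
      (fun u hu => hψneg u fun i => ?_)
    · exact lt_of_lt_of_le (hv i) hu
    · exact (hv i).trans hu
  -- basic facts about y
  have hycont : ContinuousOn y (Set.Ioc (-T) 0) := fun t ht =>
    (hy t ht).continuousWithinAt
  have hyd : ∀ t ∈ Set.Ioo (-T) 0, HasDerivAt y (f (y t)) t := fun t ht =>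
    (hy t ⟨ht.1, ht.2.le⟩).hasDerivAt (Ioc_mem_nhds_iff.2 ht)
  -- invariance: y t ≥ y₀ on Ioc (-T) 0
  have hyge : ∀ t ∈ Set.Ioc (-T) 0, y₀ ≤ y t := by
    intro t₁ ht₁
    by_contra hlt
    push_neg at hlt
    have ht₁0 : t₁ < 0 := by
      rcases lt_or_eq_of_le ht₁.2 with h | h
      · exact h
      · exfalso; rw [h, hy0] at hlt; exact lt_irrefl _ hlt
    set c : ℝ := Finset.univ.sup' hne k with hc
    have hkc : ∀ i, k i ≤ c := fun i => Finset.le_sup' k (mem_univ i)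
    have hcy : c < y₀ := (Finset.sup'_lt_iff hne).2 fun i _ => hy₀ i
    set m : ℝ := max c (y t₁) with hm
    have hmy : m < y₀ := max_lt hcy hlt
    set m' : ℝ := (m + y₀) / 2 with hm'
    have hmm' : m < m' := by rw [hm']; linarith
    have hm'y : m' < y₀ := by rw [hm']; linarith
    have hkm' : ∀ i, k i < m' := fun i => lt_of_le_of_lt (le_trans (hkc i) (le_max_left _ _)) hmm'
    have hIccsub : Set.Icc t₁ 0 ⊆ Set.Ioc (-T) 0 := fun x hx => ⟨lt_of_lt_of_le ht₁.1 hx.1, hx.2⟩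
    have hyco : ContinuousOn y (Set.Icc t₁ 0) := hycont.mono hIccsub
    -- the set where y = m'
    set A : Set ℝ := Set.Icc t₁ 0 ∩ y ⁻¹' {m'} with hA
    have hAne : A.Nonempty := by
      have h1 : m' ∈ Set.Icc (y t₁) (y 0) := by
        rw [hy0]
        exact ⟨le_of_lt (lt_of_le_of_lt (le_max_right c (y t₁)) hmm'), hm'y.le⟩
      obtain ⟨t₂, ht₂, hyt₂⟩ := intermediate_value_Icc ht₁.2 hyco h1
      exact ⟨t₂, ht₂, hyt₂⟩
    have hAclosed : IsClosed A :=
      hyco.preimage_isClosed_of_isClosed isClosed_Icc isClosed_singleton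
    have hAbdd : BddAbove A := ⟨0, fun x hx => hx.1.2⟩
    set s₀ : ℝ := sSup A with hs₀
    have hs₀A : s₀ ∈ A := hAclosed.csSup_mem hAne hAbdd
    have hys₀ : y s₀ = m' := hs₀A.2
    have hs₀0 : s₀ < 0 := by
      rcases lt_or_eq_of_le hs₀A.1.2 with h | h
      · exact h
      · exfalso; rw [h, hy0] at hys₀; exact absurd hys₀ (ne_of_gt hm'y)
    have hub : ∀ x ∈ A, x ≤ s₀ := fun x hx => le_csSup hAbdd hx
    -- y > m' on (s₀, 0]
    have hgt : ∀ x ∈ Set.Ioc s₀ 0, m' < y x := by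
      intro x hx
      by_contra hle
      push_neg at hle
      have hx1 : t₁ ≤ x := le_trans hs₀A.1.1 hx.1.le
      have h1 : m' ∈ Set.Icc (y x) (y 0) := ⟨hle, by rw [hy0]; exact hm'y.le⟩
      obtain ⟨t₂, ht₂, hyt₂⟩ := intermediate_value_Icc hx.2
        (hyco.mono fun z hz => ⟨le_trans hx1 hz.1, hz.2⟩) h1
      have : t₂ ≤ s₀ := hub t₂ ⟨⟨le_trans hx1 ht₂.1, ht₂.2⟩, hyt₂⟩
      have : s₀ < t₂ := lt_of_lt_of_le hx.1 ht₂.1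
      linarith
    -- y is strictly decreasing on [s₀, 0]
    have hanti : StrictAntiOn y (Set.Icc s₀ 0) := by
      refine strictAntiOn_of_deriv_neg (convex_Icc s₀ 0)
        (hyco.mono fun z hz => ⟨le_trans hs₀A.1.1 hz.1, hz.2⟩) (fun x hx => ?_)
      rw [interior_Icc] at hx
      have hxIoo : x ∈ Set.Ioo (-T) 0 := ⟨lt_trans (lt_of_lt_of_le ht₁.1 hs₀A.1.1) hx.1, hx.2⟩
      rw [(hyd x hxIoo).deriv]
      refine hfneg (y x) fun i => lt_trans (hkm' i) (hgt x ⟨hx.1, hx.2.le⟩)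
    have := hanti (Set.left_mem_Icc.2 hs₀0.le) (Set.right_mem_Icc.2 hs₀0.le) hs₀0
    rw [hys₀, hy0] at this
    linarith
  -- conservation: G (y t) - t = G y₀ on Ioc (-T) 0
  have hky : ∀ t ∈ Set.Ioc (-T) 0, ∀ i, k i < y t := fun t ht i =>
    lt_of_lt_of_le (hy₀ i) (hyge t ht)
  have hcons : ∀ t ∈ Set.Ioc (-T) 0, G (y t) - t = G y₀ := by
    intro t ht
    have hIccsub : Set.Icc t 0 ⊆ Set.Ioc (-T) 0 := fun x hx => ⟨lt_of_lt_of_le ht.1 hx.1, hx.2⟩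
    have hcont : ContinuousOn (fun x => G (y x) - x) (Set.Icc t 0) := by
      refine ContinuousOn.sub ?_ continuousOn_id
      exact fun x hx => ((hGderiv (y x) (hky x (hIccsub hx))).continuousAt.comp_continuousWithinAt
        ((hycont.mono hIccsub) x hx))
    have hderiv : ∀ x ∈ Set.Ico t 0, HasDerivWithinAt (fun x => G (y x) - x) 0 (Set.Ici x) x := by
      intro x hx
      have hxIoo : x ∈ Set.Ioo (-T) 0 := ⟨lt_of_lt_of_le ht.1 hx.1, hx.2⟩
      have h1 : HasDerivAt (fun x => G (y x) - x) (ψ (y x) * f (y x) - 1) x :=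
        ((hGderiv (y x) (hky x ⟨hxIoo.1, hxIoo.2.le⟩)).comp x (hyd x hxIoo)).sub
          (hasDerivAt_id x)
      rw [hψf (y x) (hky x ⟨hxIoo.1, hxIoo.2.le⟩), sub_self] at h1
      exact h1.hasDerivWithinAt
    have := constant_of_has_deriv_right_zero hcont hderiv 0 (Set.right_mem_Icc.2 ht.2)
    rw [hy0] at this
    simpa using this.symm
  -- Part 1 : T ≤ G y₀
  have hGy₀pos : 0 < G y₀ := hGpos y₀ hy₀
  have key1 : T ≤ G y₀ := by
    by_contra hlt
    push_neg at hlt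
    have ht : -G y₀ ∈ Set.Ioc (-T) 0 := ⟨neg_lt_neg hlt, by linarith⟩
    have h1 := hcons _ ht
    have h2 : 0 < G (y (-G y₀)) := hGpos _ (hky _ ht)
    linarith
  -- Part 2 : G y₀ < bound
  set Q : ℝ := ∏ i, (1 - k i / y₀) with hQ
  have hQpos : 0 < Q := Finset.prod_pos fun i _ => by
    have : k i / y₀ < 1 := (div_lt_one hy₀pos).2 (hy₀ i)
    linarith
  have hnR : (0:ℝ) < (n:ℝ) := by exact_mod_cast hn
  set C : ℝ := (∏ i, k i) / ((n:ℝ) * Q) with hC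
  have hCpos : 0 < C := by positivity
  set φ : ℝ → ℝ := fun u => C * (u ^ n)⁻¹ - G u with hφ
  set D : ℝ → ℝ := fun u => C * (-((n:ℝ) * u ^ (n-1)) / (u ^ n) ^ 2) - ψ u with hD
  have hφd : ∀ u, (∀ i, k i < u) → HasDerivAt φ (D u) u := by
    intro u hu
    have hu0 : 0 < u := (hk i₀).trans (hu i₀)
    exact (((hasDerivAt_pow n u).inv (pow_ne_zero n hu0.ne')).const_mul C).sub (hGderiv u hu)
  have hDneg : ∀ u, y₀ < u → D u < 0 := by
    intro u hu
    have hu0 : 0 < u := hy₀pos.trans hu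
    have hku : ∀ i, k i < u := fun i => (hy₀ i).trans hu
    have hPpos : 0 < ∏ i, (1 - k i / u) := Finset.prod_pos fun i _ => by
      have : k i / u < 1 := (div_lt_one hu0).2 (hku i)
      linarith
    have hQP : Q < ∏ i, (1 - k i / u) := by
      refine Finset.prod_lt_prod_of_nonempty (fun i _ => ?_) (fun i _ => ?_) hne
      · have : k i / y₀ < 1 := (div_lt_one hy₀pos).2 (hy₀ i)
        linarith
      · have : k i / u < k i / y₀ := div_lt_div_of_pos_left (hk i) hy₀pos hu
        linarith
    have hprod : ∏ i, (u - k i) = u ^ n * ∏ i, (1 - k i / u) := by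
      have h1 : ∀ i : Fin n, u - k i = u * (1 - k i / u) := fun i => by field_simp
      rw [Finset.prod_congr rfl fun i _ => h1 i, Finset.prod_mul_distrib,
        Finset.prod_const, Finset.card_univ, Fintype.card_fin]
    have hψu : ψ u = (f u)⁻¹ := eq_inv_of_mul_eq_one_left (hψf u hku)
    have hfu : f u = -(u ^ (n+1) * ∏ i, (1 - k i / u)) / ∏ i, k i := by
      rw [f_eq u, hprod]; simp only [div_eq_mul_inv]; ring
    have hRHS : ψ u = -((∏ i, k i) / ((∏ i, (1 - k i / u)) * u ^ (n+1))) := by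
      rw [hψu, hfu, ← neg_div, inv_div, div_neg]
      simp only [div_eq_mul_inv]
      ring
    have hLHS : C * (-((n:ℝ) * u ^ (n-1)) / (u ^ n) ^ 2) = -((∏ i, k i) / (Q * u ^ (n+1))) := by
      have he : (u ^ n) ^ 2 = u ^ (n-1) * u ^ (n+1) := by
        rw [← pow_mul, ← pow_add]; congr 1; omega
      rw [he, hC]
      have hun1 : u ^ (n-1) ≠ 0 := pow_ne_zero _ hu0.ne'
      have hun2 : (u:ℝ) ^ (n+1) ≠ 0 := pow_ne_zero _ hu0.ne'
      field_simp
    show C * (-((n:ℝ) * u ^ (n-1)) / (u ^ n) ^ 2) - ψ u < 0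
    rw [hLHS, hRHS, sub_neg_eq_add]
    have hkey : (∏ i, k i) / ((∏ i, (1 - k i / u)) * u ^ (n+1)) <
        (∏ i, k i) / (Q * u ^ (n+1)) := by
      refine div_lt_div_of_pos_left hKpos (by positivity) ?_
      exact mul_lt_mul_of_pos_right hQP (by positivity)
    linarith
  have hφanti : StrictAntiOn φ (Set.Ici y₀) :=
    strictAntiOn_of_hasDerivAt φ D y₀
      (fun u hu => hφd u fun i => lt_of_lt_of_le (hy₀ i) hu)
      (fun u hu => hDneg u hu)
  have hφlim : Filter.Tendsto φ Filter.atTop (nhds 0) := by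
    have h1 : Filter.Tendsto (fun u : ℝ => C * (u ^ n)⁻¹) Filter.atTop (nhds 0) := by
      have := ((Filter.tendsto_pow_atTop (Nat.one_le_iff_ne_zero.1 hn)).inv_tendsto_atTop).const_mul C
      simpa using this
    simpa using h1.sub hGlim
  have hφpos : 0 < φ y₀ := pos_of_strictAntiOn_tendsto φ y₀ hφanti hφlim
  have key2 : G y₀ < (∏ i, k i) / ((n:ℝ) * y₀ ^ n * Q) := by
    have he : C * (y₀ ^ n)⁻¹ = (∏ i, k i) / ((n:ℝ) * y₀ ^ n * Q) := by
      rw [hC, div_eq_mul_inv, mul_assoc, ← mul_inv, div_eq_mul_inv]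
      congr 2
      ring
    have : G y₀ < C * (y₀ ^ n)⁻¹ := by
      have := hφpos
      simp only [hφ] at this
      linarith
    linarith [he ▸ this]
  exact ⟨key1, key2⟩
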